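/- arXiv:1807.05328 — 2 statements merged into one kernel-verified Lean document; each statement's English description precedes it below -/
import Mathlib

section
/- Suppose each f_i : ℝ^d → ℝ (i = 1,…,n, n ≥ 2) is convex and Λ-smooth, with w_* a global minimizer of F(w) = (1/n) ∑_{i=1}^n f_i(w), and 1 ≤ b ≤ n. Set β(b) = (n−b)/(b(n−1)) and N = (2/n) ∑_{i=1}^n ‖∇f_i(w_*)‖². Then for every w ∈ ℝ^d, the uniform average over all size-b subsets S of {1,…,n} satisfies E_S[‖∇F^S(w)‖²] ≤ 4 β(b) Λ (F(w) − F(w_*)) + 2‖∇F(w)‖² + N. -/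
open scoped Matrix RealInnerProductSpace
open Finset

section Aux

variable {E : Type*} [NormedAddCommGroup E] [InnerProductSpace ℝ E] {ι : Type*}

lemma count_subsets {α : Type*} [DecidableEq α] (s t : Finset α) (hts : t ⊆ s) (b : ℕ)
    (htb : t.card ≤ b) :
    ((powersetCard b s).filter (fun S => t ⊆ S)).card = (s.card - t.card).choose (b - t.card) := by
  rw [← Finset.card_sdiff_of_subset hts, ← Finset.card_powersetCard (b - t.card) (s \ t)]
  apply Finset.card_nbij' (fun S => S \ t) (fun U => U ∪ t)
  · intro S hS
    simp only [mem_coe, mem_filter, mem_powersetCard] at hS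
    obtain ⟨⟨hSs, hSc⟩, htS⟩ := hS
    simp only [mem_coe, mem_powersetCard]
    exact ⟨sdiff_subset_sdiff hSs le_rfl, by rw [card_sdiff_of_subset htS, hSc]⟩
  · intro U hU
    simp only [mem_coe, mem_powersetCard] at hU
    obtain ⟨hUs, hUc⟩ := hU
    have hdisj : Disjoint U t := (subset_sdiff.mp hUs).2
    simp only [mem_coe, mem_filter, mem_powersetCard]
    refine ⟨⟨union_subset (hUs.trans sdiff_subset) hts, ?_⟩, subset_union_right⟩
    rw [card_union_of_disjoint hdisj, hUc]
    omega
  · intro S hS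
    simp only [mem_coe, mem_filter, mem_powersetCard] at hS
    exact sdiff_union_of_subset hS.2
  · intro U hU
    simp only [mem_coe, mem_powersetCard] at hU
    have hdisj : Disjoint U t := (subset_sdiff.mp hU.1).2
    exact union_sdiff_cancel_right hdisj

lemma norm_sum_sq_eq (s : Finset ι) (g : ι → E) :
    ‖∑ i ∈ s, g i‖ ^ 2 = ∑ i ∈ s, ∑ j ∈ s, ⟪g i, g j⟫ := by
  rw [← real_inner_self_eq_norm_sq, sum_inner]
  exact Finset.sum_congr rfl fun i _ => inner_sum _ _ _

lemma expand_sum (n b : ℕ) (g : Fin n → E) :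
    ∑ S ∈ powersetCard b (univ : Finset (Fin n)), ‖∑ i ∈ S, g i‖ ^ 2
      = ∑ i, ∑ j, (((powersetCard b (univ : Finset (Fin n))).filter
          (fun S => i ∈ S ∧ j ∈ S)).card : ℝ) * ⟪g i, g j⟫ := by
  have h1 : ∀ S : Finset (Fin n), ‖∑ i ∈ S, g i‖ ^ 2
      = ∑ i, ∑ j, (if i ∈ S ∧ j ∈ S then ⟪g i, g j⟫ else 0) := by
    intro S
    rw [norm_sum_sq_eq]
    simp only [ite_and, Finset.sum_ite_irrel, Finset.sum_const_zero, Finset.sum_ite_mem,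
      univ_inter]
  simp only [h1]
  rw [Finset.sum_comm]
  refine Finset.sum_congr rfl fun i _ => ?_
  rw [Finset.sum_comm]
  refine Finset.sum_congr rfl fun j _ => ?_
  rw [Finset.sum_ite, Finset.sum_const, Finset.sum_const_zero, add_zero, nsmul_eq_mul]

/-- Count of `b`-subsets containing a fixed element. -/
lemma count_single (n b : ℕ) (hb1 : 1 ≤ b) (i : Fin n) :
    ((powersetCard b (univ : Finset (Fin n))).filter (fun S => i ∈ S ∧ i ∈ S)).card
      = (n - 1).choose (b - 1) := by
  have h := count_subsets (univ : Finset (Fin n)) {i} (by simp) b (by simpa using hb1)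
  simp only [Finset.singleton_subset_iff, Finset.card_singleton, Finset.card_univ,
    Fintype.card_fin] at h
  rw [← h]
  congr 1
  ext S
  simp [and_self]

/-- Count of `b`-subsets containing two fixed distinct elements. -/
lemma count_pair (n b : ℕ) (i j : Fin n) (hij : i ≠ j) :
    ((powersetCard b (univ : Finset (Fin n))).filter (fun S => i ∈ S ∧ j ∈ S)).card
      = if 2 ≤ b then (n - 2).choose (b - 2) else 0 := by
  split_ifs with hb2
  · have h := count_subsets (univ : Finset (Fin n)) {i, j} (by simp) b
      (by rw [Finset.card_insert_of_notMem (by simpa using hij), Finset.card_singleton]; omega)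
    have hc : ({i, j} : Finset (Fin n)).card = 2 := by
      rw [Finset.card_insert_of_notMem (by simpa using hij), Finset.card_singleton]
    rw [hc] at h
    simp only [Finset.card_univ, Fintype.card_fin] at h
    rw [← h]
    congr 1
    ext S
    simp [Finset.insert_subset_iff]
  · rw [Finset.card_eq_zero, Finset.filter_eq_empty_iff]
    intro S hS
    simp only [mem_powersetCard_univ] at hS
    rintro ⟨hiS, hjS⟩
    have : 1 < S.card := Finset.one_lt_card.mpr ⟨i, hiS, j, hjS, hij⟩
    omega

lemma main_count (n b : ℕ) (hb1 : 1 ≤ b) (g : Fin n → E) :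
    ∑ S ∈ powersetCard b (univ : Finset (Fin n)), ‖∑ i ∈ S, g i‖ ^ 2
      = ((if 2 ≤ b then (n - 2).choose (b - 2) else 0 : ℕ) : ℝ) * ‖∑ i, g i‖ ^ 2
        + (((n - 1).choose (b - 1) : ℝ)
            - ((if 2 ≤ b then (n - 2).choose (b - 2) else 0 : ℕ) : ℝ)) * ∑ i, ‖g i‖ ^ 2 := by
  set c2 : ℕ := if 2 ≤ b then (n - 2).choose (b - 2) else 0 with hc2
  set C1 : ℕ := (n - 1).choose (b - 1) with hC1
  rw [expand_sum]
  have hcount : ∀ i j : Fin n,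
      (((powersetCard b (univ : Finset (Fin n))).filter
          (fun S => i ∈ S ∧ j ∈ S)).card : ℝ) = if i = j then (C1 : ℝ) else (c2 : ℝ) := by
    intro i j
    split_ifs with hij
    · subst hij; rw [count_single n b hb1 i]
    · rw [count_pair n b i j hij]
  simp only [hcount]
  have hsplit : ∀ i j : Fin n, (if i = j then (C1 : ℝ) else (c2 : ℝ)) * ⟪g i, g j⟫
      = (c2 : ℝ) * ⟪g i, g j⟫ + (if i = j then ((C1 : ℝ) - c2) * ⟪g i, g j⟫ else 0) := by
    intro i j
    split_ifs <;> ring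
  simp only [hsplit]
  rw [Finset.sum_congr rfl (fun i _ => Finset.sum_add_distrib)]
  rw [Finset.sum_add_distrib]
  congr 1
  · rw [norm_sum_sq_eq]
    rw [Finset.mul_sum]
    refine Finset.sum_congr rfl fun i _ => ?_
    rw [Finset.mul_sum]
  · rw [Finset.mul_sum]
    refine Finset.sum_congr rfl fun i _ => ?_
    rw [Finset.sum_ite_eq, if_pos (Finset.mem_univ i), real_inner_self_eq_norm_sq]

lemma nat_fact1 (n b : ℕ) (hn : 1 ≤ n) (hb1 : 1 ≤ b) :
    n * (n - 1).choose (b - 1) = b * n.choose b := by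
  obtain ⟨m, rfl⟩ : ∃ m, n = m + 1 := ⟨n - 1, by omega⟩
  obtain ⟨k, rfl⟩ : ∃ k, b = k + 1 := ⟨b - 1, by omega⟩
  show (m + 1) * Nat.choose m k = (k + 1) * Nat.choose (m + 1) (k + 1)
  exact (Nat.add_one_mul_choose_eq m k).trans (mul_comm _ _)

lemma nat_fact2 (n b : ℕ) (hn : 2 ≤ n) (hb1 : 1 ≤ b) :
    (n - 1) * (if 2 ≤ b then (n - 2).choose (b - 2) else 0)
      = (b - 1) * (n - 1).choose (b - 1) := by
  split_ifs with hb2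
  · obtain ⟨m, rfl⟩ : ∃ m, n = m + 2 := ⟨n - 2, by omega⟩
    obtain ⟨k, rfl⟩ : ∃ k, b = k + 2 := ⟨b - 2, by omega⟩
    show (m + 1) * Nat.choose m k = (k + 1) * Nat.choose (m + 1) (k + 1)
    exact (Nat.add_one_mul_choose_eq m k).trans (mul_comm _ _)
  · have : b = 1 := by omega
    subst this
    simp

lemma hasDerivAt_line [CompleteSpace E] (f : E → ℝ) (hd : Differentiable ℝ f) (x v : E) (t : ℝ) :
    HasDerivAt (fun t : ℝ => f (x + t • v)) ⟪gradient f (x + t • v), v⟫ t := by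
  have hline : HasDerivAt (fun t : ℝ => x + t • v) v t := by
    simpa using ((hasDerivAt_id t).smul_const v).const_add x
  have hgrad := (hd (x + t • v)).hasGradientAt
  rw [hasGradientAt_iff_hasFDerivAt] at hgrad
  have := hgrad.comp_hasDerivAt t hline
  simpa [InnerProductSpace.toDual_apply_apply, Function.comp_def] using this

/-- First-order condition for convexity. -/
lemma conv_lb [CompleteSpace E] (f : E → ℝ) (hd : Differentiable ℝ f)
    (hc : ConvexOn ℝ Set.univ f) (x y : E) :
    f x + ⟪gradient f x, y - x⟫ ≤ f y := by
  set φ : ℝ → ℝ := fun t => f (x + t • (y - x)) with hφ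
  have hder : ∀ t : ℝ, HasDerivAt φ ⟪gradient f (x + t • (y - x)), y - x⟫ t :=
    hasDerivAt_line f hd x (y - x)
  have hconvφ : ConvexOn ℝ Set.univ φ := by
    have := hc.comp_affineMap (AffineMap.lineMap x y : ℝ →ᵃ[ℝ] E)
    have heq : (f ∘ (AffineMap.lineMap x y : ℝ →ᵃ[ℝ] E)) = φ := by
      funext t
      simp [hφ, AffineMap.lineMap_apply, add_comm]
    rw [heq] at this
    simpa using this
  have hslope := hconvφ.le_slope_of_hasDerivAt (Set.mem_univ (0:ℝ)) (Set.mem_univ (1:ℝ))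
    one_pos (by simpa using hder 0)
  have : ⟪gradient f x, y - x⟫ ≤ φ 1 - φ 0 := by
    simpa [slope_def_field] using hslope
  simp only [hφ] at this
  simp only [zero_smul, add_zero, one_smul] at this
  have hxy : x + (y - x) = y := by abel
  rw [hxy] at this
  linarith

/-- Descent lemma. -/
lemma descent [CompleteSpace E] (f : E → ℝ) (hd : Differentiable ℝ f) (Λ : ℝ)
    (hl : ∀ a c : E, ‖gradient f c - gradient f a‖ ≤ Λ * ‖c - a‖) (x v : E) :
    f (x + v) ≤ f x + ⟪gradient f x, v⟫ + Λ / 2 * ‖v‖ ^ 2 := by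
  set φ : ℝ → ℝ := fun t => f (x + t • v) with hφ
  have hder : ∀ t : ℝ, HasDerivAt φ ⟪gradient f (x + t • v), v⟫ t := hasDerivAt_line f hd x v
  set ψ : ℝ → ℝ := fun t => φ t - t * ⟪gradient f x, v⟫ - Λ * ‖v‖ ^ 2 * t ^ 2 / 2 with hψ
  have hψder : ∀ t : ℝ, HasDerivAt ψ
      (⟪gradient f (x + t • v), v⟫ - ⟪gradient f x, v⟫ - Λ * ‖v‖ ^ 2 * t) t := by
    intro t
    have h1 : HasDerivAt (fun t : ℝ => t * ⟪gradient f x, v⟫) ⟪gradient f x, v⟫ t := by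
      simpa using (hasDerivAt_id t).mul_const ⟪gradient f x, v⟫
    have h2 : HasDerivAt (fun t : ℝ => Λ * ‖v‖ ^ 2 * t ^ 2 / 2) (Λ * ‖v‖ ^ 2 * t) t := by
      have := ((hasDerivAt_pow 2 t).const_mul (Λ * ‖v‖ ^ 2)).div_const 2
      refine this.congr_deriv ?_
      ring
    exact ((hder t).sub h1).sub h2
  have hmono : AntitoneOn ψ (Set.Icc 0 1) := by
    apply antitoneOn_of_deriv_nonpos (convex_Icc 0 1)
    · exact (fun t _ => ((hψder t).differentiableAt).continuousAt.continuousWithinAt)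
    · intro t ht
      exact ((hψder t).differentiableAt).differentiableWithinAt
    · intro t ht
      rw [interior_Icc] at ht
      rw [(hψder t).deriv]
      have h3 : ⟪gradient f (x + t • v) - gradient f x, v⟫ ≤ Λ * t * ‖v‖ ^ 2 := by
        calc ⟪gradient f (x + t • v) - gradient f x, v⟫
            ≤ ‖gradient f (x + t • v) - gradient f x‖ * ‖v‖ := real_inner_le_norm _ _
          _ ≤ (Λ * ‖x + t • v - x‖) * ‖v‖ := by
              apply mul_le_mul_of_nonneg_right (hl x (x + t • v)) (norm_nonneg v)
          _ = Λ * t * ‖v‖ ^ 2 := by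
              rw [add_sub_cancel_left, norm_smul]
              simp [abs_of_pos ht.1]
              ring
      rw [inner_sub_left] at h3
      nlinarith
  have h01 := hmono (Set.mem_Icc.mpr ⟨le_refl 0, zero_le_one⟩)
    (Set.mem_Icc.mpr ⟨zero_le_one, le_refl 1⟩) zero_le_one
  simp only [hψ, hφ] at h01
  simp only [zero_smul, add_zero, one_smul, one_pow, mul_one, zero_pow, one_mul] at h01
  norm_num at h01
  linarith [show ⟪gradient f x, v⟫ = fderiv ℝ f x v by simp]

/-- Cocoercivity. -/
lemma coco [CompleteSpace E] (f : E → ℝ) (hd : Differentiable ℝ f)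
    (hc : ConvexOn ℝ Set.univ f) (Λ : ℝ)
    (hΛ : 0 < Λ) (hl : ∀ a c : E, ‖gradient f c - gradient f a‖ ≤ Λ * ‖c - a‖) (x y : E) :
    ‖gradient f x - gradient f y‖ ^ 2 ≤ 2 * Λ * (f x - f y - ⟪gradient f y, x - y⟫) := by
  set u := gradient f x - gradient f y with hu
  have hdesc := descent f hd Λ hl x (-(Λ⁻¹ • u))
  have hlb := conv_lb f hd hc y (x + -(Λ⁻¹ • u))
  have hnorm : ‖-(Λ⁻¹ • u)‖ ^ 2 = Λ⁻¹ ^ 2 * ‖u‖ ^ 2 := by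
    rw [norm_neg, norm_smul, Real.norm_eq_abs, abs_of_pos (inv_pos.mpr hΛ)]
    ring
  have hinner1 : ⟪gradient f x, -(Λ⁻¹ • u)⟫ = -(Λ⁻¹ * ⟪gradient f x, u⟫) := by
    rw [inner_neg_right, real_inner_smul_right]
  have hinner2 : ⟪gradient f y, x + -(Λ⁻¹ • u) - y⟫
      = ⟪gradient f y, x - y⟫ - Λ⁻¹ * ⟪gradient f y, u⟫ := by
    have : x + -(Λ⁻¹ • u) - y = (x - y) - Λ⁻¹ • u := by abel
    rw [this, inner_sub_right, real_inner_smul_right]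
  have hself : ⟪gradient f x, u⟫ - ⟪gradient f y, u⟫ = ‖u‖ ^ 2 := by
    rw [← inner_sub_left, ← hu, real_inner_self_eq_norm_sq]
  rw [hnorm, hinner1] at hdesc
  rw [hinner2] at hlb
  have hΛ' : Λ ≠ 0 := ne_of_gt hΛ
  have hself2 : Λ⁻¹ * ⟪gradient f x, u⟫ - Λ⁻¹ * ⟪gradient f y, u⟫ = Λ⁻¹ * ‖u‖ ^ 2 := by
    rw [← mul_sub, hself]
  have key : Λ⁻¹ * ‖u‖ ^ 2 - Λ / 2 * (Λ⁻¹ ^ 2 * ‖u‖ ^ 2) ≤ f x - f y - ⟪gradient f y, x - y⟫ := by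
    linarith [hdesc, hlb, hself2]
  have : Λ⁻¹ * ‖u‖ ^ 2 - Λ / 2 * (Λ⁻¹ ^ 2 * ‖u‖ ^ 2) = ‖u‖ ^ 2 / (2 * Λ) := by
    field_simp
    ring
  rw [this] at key
  rw [div_le_iff₀ (by positivity)] at key
  linarith [key]

end Aux

set_option maxHeartbeats 1000000 in
theorem stmt4 (d n b : ℕ) (hn : 2 ≤ n) (hb1 : 1 ≤ b) (hbn : b ≤ n)
    (Λ : ℝ)
    (f : Fin n → EuclideanSpace ℝ (Fin d) → ℝ)
    (hdiff : ∀ i, Differentiable ℝ (f i))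
    (hconv : ∀ i, ConvexOn ℝ Set.univ (f i))
    (hsmooth : ∀ i, ∀ w w' : EuclideanSpace ℝ (Fin d),
      ‖gradient (f i) w' - gradient (f i) w‖ ≤ Λ * ‖w' - w‖)
    (F : EuclideanSpace ℝ (Fin d) → ℝ) (hF : ∀ w, F w = (n : ℝ)⁻¹ * ∑ i, f i w)
    (wstar : EuclideanSpace ℝ (Fin d)) (hmin : ∀ w, F wstar ≤ F w)
    (β N : ℝ) (hβ : β = ((n : ℝ) - b) / (b * ((n : ℝ) - 1)))
    (hN : N = 2 / (n : ℝ) * ∑ i, ‖gradient (f i) wstar‖ ^ 2)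
    (w : EuclideanSpace ℝ (Fin d)) :
    (∑ S ∈ Finset.powersetCard b (Finset.univ : Finset (Fin n)),
        ‖(b : ℝ)⁻¹ • ∑ i ∈ S, gradient (f i) w‖ ^ 2) / (n.choose b : ℝ)
      ≤ 4 * β * Λ * (F w - F wstar) + 2 * ‖gradient F w‖ ^ 2 + N := by
  classical
  set g : Fin n → EuclideanSpace ℝ (Fin d) := fun i => gradient (f i) w with hg
  set gs : Fin n → EuclideanSpace ℝ (Fin d) := fun i => gradient (f i) wstar with hgs
  set A : ℝ := ∑ i, ‖g i‖ ^ 2 with hA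
  set P : ℝ := ‖∑ i, g i‖ ^ 2 with hP
  set Astar : ℝ := ∑ i, ‖gs i‖ ^ 2 with hAstar
  have hn0 : (0:ℝ) < (n:ℝ) := by
    have : 0 < n := by omega
    exact_mod_cast this
  have hnR : (n:ℝ) ≠ 0 := ne_of_gt hn0
  have hb0 : (0:ℝ) < (b:ℝ) := by
    have : 0 < b := by omega
    exact_mod_cast this
  have hn1 : (1:ℝ) < (n:ℝ) := by exact_mod_cast hn
  have hbR : (1:ℝ) ≤ (b:ℝ) := by exact_mod_cast hb1
  have hbnR : (b:ℝ) ≤ (n:ℝ) := by exact_mod_cast hbn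
  -- gradient of F
  have hgradF : ∀ u : EuclideanSpace ℝ (Fin d), HasGradientAt F ((n:ℝ)⁻¹ • ∑ i, gradient (f i) u) u := by
    intro u
    have hFfun : F = fun x => (n : ℝ)⁻¹ * ∑ i, f i x := funext hF
    rw [hasGradientAt_iff_hasFDerivAt]
    have hf : HasFDerivAt (fun x => (n:ℝ)⁻¹ * ∑ i, f i x)
        ((n:ℝ)⁻¹ • (∑ i, InnerProductSpace.toDual ℝ (EuclideanSpace ℝ (Fin d)) (gradient (f i) u))) u := by
      apply HasFDerivAt.const_mul
      apply HasFDerivAt.fun_sum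
      intro i _
      exact hasGradientAt_iff_hasFDerivAt.mp (hdiff i u).hasGradientAt
    rw [hFfun]
    refine hf.congr_fderiv ?_
    rw [map_smul, map_sum]
  have hgFw : gradient F w = (n:ℝ)⁻¹ • ∑ i, g i := (hgradF w).gradient
  -- gradient of F vanishes at the minimizer
  have hsum0 : ∑ i, gs i = 0 := by
    have hloc : IsLocalMin F wstar := Filter.Eventually.of_forall hmin
    have h0 : fderiv ℝ F wstar = 0 := hloc.fderiv_eq_zero
    have hdF := hasGradientAt_iff_hasFDerivAt.mp (hgradF wstar)
    have := hdF.fderiv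
    rw [h0] at this
    have hz : (n:ℝ)⁻¹ • ∑ i, gs i = 0 := by
      have := congrArg (InnerProductSpace.toDual ℝ (EuclideanSpace ℝ (Fin d))).symm this.symm
      simpa [hgs, gradient] using this
    rcases smul_eq_zero.mp hz with h | h
    · exact absurd h (inv_ne_zero hnR)
    · exact h
  -- key inequality
  have hΔ : 0 ≤ F w - F wstar := by linarith [hmin w]
  have hAstar0 : 0 ≤ Astar := by
    rw [hAstar]; exact Finset.sum_nonneg fun i _ => sq_nonneg _
  have hKey : A ≤ (n : ℝ) * (4 * Λ * (F w - F wstar)) + 2 * Astar := by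
    rcases lt_or_ge Λ 0 with hneg | hpos0
    · -- Λ < 0 : all points coincide
      have hpts : ∀ x y : EuclideanSpace ℝ (Fin d), x = y := by
        intro x y
        by_contra hxy
        have h := hsmooth ⟨0, by omega⟩ x y
        have h1 : 0 < ‖y - x‖ := by
          rw [norm_pos_iff]
          exact sub_ne_zero.mpr (Ne.symm hxy)
        nlinarith [norm_nonneg (gradient (f ⟨0, by omega⟩) y - gradient (f ⟨0, by omega⟩) x)]
      have hw : w = wstar := hpts w wstar
      have hgeq : ∀ i, g i = gs i := fun i => by rw [hg, hgs, hw]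
      have hFeq : F w = F wstar := by rw [hw]
      rw [hFeq]
      have : A = Astar := by
        rw [hA, hAstar]
        exact Finset.sum_congr rfl fun i _ => by rw [hgeq i]
      rw [this]
      nlinarith
    rcases eq_or_lt_of_le hpos0 with heq | hΛpos
    · -- Λ = 0 : gradients constant
      have hgeq : ∀ i, g i = gs i := by
        intro i
        have h := hsmooth i wstar w
        rw [← heq, zero_mul] at h
        have := norm_le_zero_iff.mp h
        rw [sub_eq_zero] at this
        exact this
      have : A = Astar := by
        rw [hA, hAstar]
        exact Finset.sum_congr rfl fun i _ => by rw [hgeq i]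
      rw [this, ← heq]
      nlinarith
    · -- Λ > 0 : cocoercivity
      have hcoco : ∀ i, ‖g i - gs i‖ ^ 2
          ≤ 2 * Λ * (f i w - f i wstar - ⟪gs i, w - wstar⟫) :=
        fun i => coco (f i) (hdiff i) (hconv i) Λ hΛpos (fun a c => hsmooth i a c) w wstar
      have hsum : ∑ i, ‖g i - gs i‖ ^ 2
          ≤ 2 * Λ * ((n : ℝ) * F w - (n : ℝ) * F wstar) := by
        have h1 : ∑ i, ‖g i - gs i‖ ^ 2
            ≤ ∑ i, 2 * Λ * (f i w - f i wstar - ⟪gs i, w - wstar⟫) :=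
          Finset.sum_le_sum fun i _ => hcoco i
        have h2 : ∑ i, 2 * Λ * (f i w - f i wstar - ⟪gs i, w - wstar⟫)
            = 2 * Λ * (∑ i, f i w - ∑ i, f i wstar - ⟪∑ i, gs i, w - wstar⟫) := by
          rw [← Finset.mul_sum]
          congr 1
          rw [sum_inner]
          rw [Finset.sum_sub_distrib, Finset.sum_sub_distrib]
        have h3 : ∑ i, f i w = (n : ℝ) * F w := by
          rw [hF w]; field_simp
        have h4 : ∑ i, f i wstar = (n : ℝ) * F wstar := by
          rw [hF wstar]; field_simp
        rw [h2, h3, h4, hsum0] at h1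
        simpa using h1
      have hsq : ∀ i, ‖g i‖ ^ 2 ≤ 2 * ‖g i - gs i‖ ^ 2 + 2 * ‖gs i‖ ^ 2 := by
        intro i
        have h := norm_add_le (g i - gs i) (gs i)
        rw [sub_add_cancel] at h
        nlinarith [h, norm_nonneg (g i), norm_nonneg (g i - gs i), norm_nonneg (gs i), sq_nonneg (‖g i - gs i‖ - ‖gs i‖)]
      have hsumsq : A ≤ 2 * ∑ i, ‖g i - gs i‖ ^ 2 + 2 * Astar := by
        rw [hA, hAstar]
        calc ∑ i, ‖g i‖ ^ 2 ≤ ∑ i, (2 * ‖g i - gs i‖ ^ 2 + 2 * ‖gs i‖ ^ 2) :=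
              Finset.sum_le_sum fun i _ => hsq i
          _ = 2 * ∑ i, ‖g i - gs i‖ ^ 2 + 2 * ∑ i, ‖gs i‖ ^ 2 := by
              rw [Finset.sum_add_distrib, ← Finset.mul_sum, ← Finset.mul_sum]
      nlinarith [hsum, hsumsq]
  -- combinatorial identity
  set c2 : ℕ := if 2 ≤ b then (n - 2).choose (b - 2) else 0 with hc2def
  set C1 : ℕ := (n - 1).choose (b - 1) with hC1def
  set Cb : ℕ := n.choose b with hCbdef
  have hCb : (0:ℝ) < (Cb : ℝ) := by exact_mod_cast Nat.choose_pos hbn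
  have hfact1 : (n : ℝ) * (C1 : ℝ) = (b : ℝ) * (Cb : ℝ) := by
    exact_mod_cast nat_fact1 n b (by omega) hb1
  have hfact2 : ((n : ℝ) - 1) * (c2 : ℝ) = ((b : ℝ) - 1) * (C1 : ℝ) := by
    have h := nat_fact2 n b hn hb1
    have : ((n - 1 : ℕ) : ℝ) * (c2 : ℝ) = ((b - 1 : ℕ) : ℝ) * (C1 : ℝ) := by
      exact_mod_cast h
    rwa [Nat.cast_sub (by omega), Nat.cast_sub hb1, Nat.cast_one] at this
  have hT := main_count n b hb1 g
  -- the left-hand side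
  have hLHS : (∑ S ∈ Finset.powersetCard b (Finset.univ : Finset (Fin n)),
        ‖(b : ℝ)⁻¹ • ∑ i ∈ S, g i‖ ^ 2) / (Cb : ℝ)
      = ((b:ℝ)⁻¹ ^ 2 * ((c2 : ℝ) * P + ((C1 : ℝ) - (c2 : ℝ)) * A)) / (Cb : ℝ) := by
    congr 1
    have : ∀ S : Finset (Fin n), ‖(b : ℝ)⁻¹ • ∑ i ∈ S, g i‖ ^ 2
        = (b:ℝ)⁻¹ ^ 2 * ‖∑ i ∈ S, g i‖ ^ 2 := by
      intro S
      rw [norm_smul, Real.norm_eq_abs, abs_of_pos (by positivity), mul_pow]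
    rw [Finset.sum_congr rfl fun S _ => this S, ← Finset.mul_sum, hT]
  have hgFnorm : ‖gradient F w‖ ^ 2 = (n:ℝ)⁻¹ ^ 2 * P := by
    rw [hgFw, norm_smul, Real.norm_eq_abs, abs_of_pos (by positivity), mul_pow, hP]
  -- the exact expectation formula
  have hE : ((b:ℝ)⁻¹ ^ 2 * ((c2 : ℝ) * P + ((C1 : ℝ) - (c2 : ℝ)) * A)) / (Cb : ℝ)
      = β * (A / n) + (1 - β) * (P / n ^ 2) := by
    have hC1v : (C1 : ℝ) = (b : ℝ) * (Cb : ℝ) / (n : ℝ) := by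
      field_simp at hfact1 ⊢
      linarith
    have hc2v : (c2 : ℝ) = ((b : ℝ) - 1) * ((b : ℝ) * (Cb : ℝ) / (n : ℝ)) / ((n : ℝ) - 1) := by
      rw [← hC1v]
      have hne : (n : ℝ) - 1 ≠ 0 := by linarith
      field_simp at hfact2 ⊢
      linarith
    rw [hC1v, hc2v, hβ]
    have hne : (n : ℝ) - 1 ≠ 0 := by linarith
    have hbne : (b : ℝ) ≠ 0 := ne_of_gt hb0
    field_simp
    ring
  rw [hLHS, hE, hgFnorm]
  -- final arithmetic
  have hNval : N = 2 / (n : ℝ) * Astar := hN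
  have hβ0 : 0 ≤ β := by
    rw [hβ]
    apply div_nonneg
    · linarith
    · apply mul_nonneg <;> linarith
  have hβ1 : β ≤ 1 := by
    rw [hβ, div_le_one (by nlinarith [mul_pos hb0 (sub_pos.mpr hn1)])]
    nlinarith [mul_nonneg hn0.le (sub_nonneg.mpr hbR)]
  have hP0 : 0 ≤ P := by rw [hP]; exact sq_nonneg _
  have hA0 : 0 ≤ A := by
    rw [hA]; exact Finset.sum_nonneg fun i _ => sq_nonneg _
  have hN0 : 0 ≤ N := by
    rw [hNval]; exact mul_nonneg (by positivity) hAstar0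
  have hKey2 : A / n ≤ 4 * Λ * (F w - F wstar) + N := by
    rw [hNval, div_le_iff₀ hn0]
    have : (4 * Λ * (F w - F wstar) + 2 / (n:ℝ) * Astar) * n
        = (n : ℝ) * (4 * Λ * (F w - F wstar)) + 2 * Astar := by
      field_simp
    rw [this]
    exact hKey
  have hmul : β * (A / n) ≤ β * (4 * Λ * (F w - F wstar) + N) :=
    mul_le_mul_of_nonneg_left hKey2 hβ0
  have hPn : 0 ≤ P / n ^ 2 := div_nonneg hP0 (by positivity)
  have h2 : (n:ℝ)⁻¹ ^ 2 * P = P / n ^ 2 := by field_simp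
  rw [h2]
  have hβN : β * N ≤ N := mul_le_of_le_one_left hN0 hβ1
  have hmul2 : (1 - β) * (P / n ^ 2) ≤ 2 * (P / n ^ 2) :=
    mul_le_mul_of_nonneg_right (by linarith) hPn
  have hmul3 : β * (4 * Λ * (F w - F wstar) + N) = 4 * β * Λ * (F w - F wstar) + β * N := by
    ring
  rw [hmul3] at hmul
  linarith [hmul, hβN, hmul2]
end

section
/- Fix d, m ≥ 1 and constants 0 < σ ≤ Σ, ε > 0, Λ̂ > 0. Let 𝓗^(0) be a real symmetric d×d matrix with Σ^{-1} I ⪯ 𝓗^(0) ⪯ σ^{-1} I, and let (s_j, y_j) ∈ ℝ^d × ℝ^d for j = 1,…,m be pairs with s_j ≠ 0 each satisfying the cautious-update conditions y_jᵀ s_j ≥ ε ‖s_j‖² and ‖y_j‖² ≤ Λ̂ (y_jᵀ s_j). Define the BFGS recursion 𝓗^(j) = 𝓗^(j−1) − (𝓗^(j−1) s_j s_jᵀ 𝓗^(j−1))/(s_jᵀ 𝓗^(j−1) s_j) + (y_j y_jᵀ)/(y_jᵀ s_j). Then each 𝓗^(j) is well defined (symmetric positive definite), and there exist constants 0 < μ₁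 ≤ μ₂ depending only on d, m, σ, Σ, ε, Λ̂ such that H = (𝓗^(m))^{-1} satisfies μ₁ I ⪯ H ⪯ μ₂ I. -/
open scoped Matrix RealInnerProductSpace
open Finset

noncomputable def bfgsUpdate {d : ℕ} (H : Matrix (Fin d) (Fin d) ℝ) (s y : Fin d → ℝ) :
    Matrix (Fin d) (Fin d) ℝ :=
  H - (s ⬝ᵥ H.mulVec s)⁻¹ • Matrix.vecMulVec (H.mulVec s) (Matrix.vecMul s H)
    + (y ⬝ᵥ s)⁻¹ • Matrix.vecMulVec y y


open Matrix

namespace BFGSAux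

variable {d : ℕ}

lemma dot_sq_le (u v : Fin d → ℝ) : (u ⬝ᵥ v)^2 ≤ (u ⬝ᵥ u) * (v ⬝ᵥ v) := by
  have := Finset.sum_mul_sq_le_sq_mul_sq Finset.univ u v
  simpa [dotProduct, sq] using this

lemma dot_self_nonneg (u : Fin d → ℝ) : 0 ≤ u ⬝ᵥ u :=
  Finset.sum_nonneg fun i _ => mul_self_nonneg _

lemma dot_self_pos {u : Fin d → ℝ} (hu : u ≠ 0) : 0 < u ⬝ᵥ u := by
  rcases (dot_self_nonneg u).lt_or_eq with h | h
  · exact h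
  · exact absurd (dotProduct_self_eq_zero.mp h.symm) hu

lemma mul_vecMulVec (M : Matrix (Fin d) (Fin d) ℝ) (u v : Fin d → ℝ) :
    M * vecMulVec u v = vecMulVec (M *ᵥ u) v := by
  ext i j
  simp only [Matrix.mul_apply, vecMulVec_apply, Matrix.mulVec, dotProduct, Finset.sum_mul]
  exact Finset.sum_congr rfl fun k _ => by ring

lemma vecMulVec_mul (u v : Fin d → ℝ) (M : Matrix (Fin d) (Fin d) ℝ) :
    vecMulVec u v * M = vecMulVec u (v ᵥ* M) := by
  ext i j
  simp only [Matrix.mul_apply, vecMulVec_apply, Matrix.vecMul, dotProduct, Finset.mul_sum]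
  exact Finset.sum_congr rfl fun k _ => by ring

lemma vecMulVec_mul_vecMulVec (u v w z : Fin d → ℝ) :
    vecMulVec u v * vecMulVec w z = (v ⬝ᵥ w) • vecMulVec u z := by
  ext i j
  simp only [Matrix.mul_apply, vecMulVec_apply, Matrix.smul_apply, dotProduct, Finset.sum_mul,
    smul_eq_mul, Finset.mul_sum]
  exact Finset.sum_congr rfl fun k _ => by ring

lemma vecMulVec_mulVec (u v w : Fin d → ℝ) :
    vecMulVec u v *ᵥ w = (v ⬝ᵥ w) • u := by
  ext i
  simp only [Matrix.mulVec, vecMulVec_apply, dotProduct, Pi.smul_apply, smul_eq_mul,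
    Finset.sum_mul]
  exact Finset.sum_congr rfl fun k _ => by ring

end BFGSAux

namespace BFGSAux2
open BFGSAux
variable {d : ℕ}

lemma herm_transpose_eq {A : Matrix (Fin d) (Fin d) ℝ} (hA : A.IsHermitian) : Aᵀ = A := by
  rw [← Matrix.conjTranspose_eq_transpose_of_trivial]; exact hA

lemma psd_cs {A : Matrix (Fin d) (Fin d) ℝ} (hA : A.PosSemidef) (x z : Fin d → ℝ) :
    (x ⬝ᵥ A *ᵥ z)^2 ≤ (x ⬝ᵥ A *ᵥ x) * (z ⬝ᵥ A *ᵥ z) := by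
  have hAt : Aᵀ = A := herm_transpose_eq hA.isHermitian
  have hq : ∀ u, 0 ≤ u ⬝ᵥ A *ᵥ u := fun u => by simpa using hA.dotProduct_mulVec_nonneg u
  have hsym : z ⬝ᵥ A *ᵥ x = x ⬝ᵥ A *ᵥ z := by
    rw [Matrix.dotProduct_mulVec, ← Matrix.mulVec_transpose, hAt, dotProduct_comm]
  have hexp : ∀ t : ℝ, (x + t • z) ⬝ᵥ A *ᵥ (x + t • z)
      = (z ⬝ᵥ A *ᵥ z) * (t * t) + 2 * (x ⬝ᵥ A *ᵥ z) * t + x ⬝ᵥ A *ᵥ x := by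
    intro t
    simp only [Matrix.mulVec_add, Matrix.mulVec_smul, dotProduct_add, add_dotProduct,
      dotProduct_smul, smul_dotProduct, smul_eq_mul, hsym]
    ring
  have := discrim_le_zero (fun t => by rw [← hexp t]; exact hq (x + t • z))
  unfold discrim at this
  nlinarith

lemma psd_quad_nonneg {A : Matrix (Fin d) (Fin d) ℝ} (hA : A.PosSemidef) (x : Fin d → ℝ) :
    0 ≤ x ⬝ᵥ A *ᵥ x := by
  have := hA.dotProduct_mulVec_nonneg x
  simpa using this

lemma pd_quad_pos {A : Matrix (Fin d) (Fin d) ℝ} (hA : A.PosDef) {x : Fin d → ℝ} (hx : x ≠ 0) :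
    0 < x ⬝ᵥ A *ᵥ x := by
  have := hA.dotProduct_mulVec_pos hx
  simpa using this

/-- inverse upper bound from lower quad bound -/
lemma inv_upper {A : Matrix (Fin d) (Fin d) ℝ} (hA : A.PosDef) {β : ℝ} (hβ : 0 < β)
    (h : ∀ x, β * (x ⬝ᵥ x) ≤ x ⬝ᵥ A *ᵥ x) :
    ∀ x, x ⬝ᵥ A⁻¹ *ᵥ x ≤ β⁻¹ * (x ⬝ᵥ x) := by
  intro x
  have hdet : IsUnit A.det := isUnit_iff_ne_zero.mpr hA.det_pos.ne'
  have hinv : A * A⁻¹ = 1 := Matrix.mul_nonsing_inv _ hdet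
  set z := A⁻¹ *ᵥ x with hz
  have hAz : A *ᵥ z = x := by
    rw [hz, Matrix.mulVec_mulVec, hinv, Matrix.one_mulVec]
  have hT : x ⬝ᵥ A⁻¹ *ᵥ x = z ⬝ᵥ A *ᵥ z := by
    rw [hAz, ← hz, dotProduct_comm]
  have hT0 : 0 ≤ x ⬝ᵥ A⁻¹ *ᵥ x := psd_quad_nonneg hA.inv.posSemidef x
  set T := x ⬝ᵥ A⁻¹ *ᵥ x with hTd
  have hzz : β * (z ⬝ᵥ z) ≤ T := by rw [hT]; exact h z
  have hcs : (x ⬝ᵥ z)^2 ≤ (x ⬝ᵥ x) * (z ⬝ᵥ z) := dot_sq_le x z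
  have hxz : x ⬝ᵥ z = T := by rw [hTd, hz]
  have hx0 : 0 ≤ x ⬝ᵥ x := dot_self_nonneg x
  have hz0 : 0 ≤ z ⬝ᵥ z := dot_self_nonneg z
  rw [hxz] at hcs
  -- β T^2 ≤ β (x⬝x)(z⬝z) ≤ (x⬝x) T
  rcases hT0.lt_or_eq with h1 | h1
  · have : β * T ≤ x ⬝ᵥ x := by nlinarith
    calc T = β⁻¹ * (β * T) := by field_simp
    _ ≤ β⁻¹ * (x ⬝ᵥ x) := by
        apply mul_le_mul_of_nonneg_left this (by positivity)
  · rw [← h1]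
    positivity

end BFGSAux2

namespace BFGSAux3
open BFGSAux BFGSAux2
variable {d : ℕ}

/-- inverse lower bound from upper quad bound -/
lemma inv_lower {A : Matrix (Fin d) (Fin d) ℝ} (hA : A.PosDef) {α : ℝ} (hα : 0 < α)
    (h : ∀ x, x ⬝ᵥ A *ᵥ x ≤ α * (x ⬝ᵥ x)) :
    ∀ x, α⁻¹ * (x ⬝ᵥ x) ≤ x ⬝ᵥ A⁻¹ *ᵥ x := by
  intro x
  have hdet : IsUnit A.det := isUnit_iff_ne_zero.mpr hA.det_pos.ne'
  have hinv : A * A⁻¹ = 1 := Matrix.mul_nonsing_inv _ hdet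
  set z := A⁻¹ *ᵥ x with hz
  have hAz : A *ᵥ z = x := by
    rw [hz, Matrix.mulVec_mulVec, hinv, Matrix.one_mulVec]
  have hT : x ⬝ᵥ A⁻¹ *ᵥ x = z ⬝ᵥ A *ᵥ z := by
    rw [hAz, ← hz, dotProduct_comm]
  set T := x ⬝ᵥ A⁻¹ *ᵥ x with hTd
  set X := x ⬝ᵥ x with hX
  have hX0 : 0 ≤ X := dot_self_nonneg x
  have hcs : (x ⬝ᵥ A *ᵥ z)^2 ≤ (x ⬝ᵥ A *ᵥ x) * (z ⬝ᵥ A *ᵥ z) := psd_cs hA.posSemidef x z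
  rw [hAz] at hcs
  have hzx : z ⬝ᵥ x = T := by rw [hTd, hz, dotProduct_comm]
  rw [hzx] at hcs
  have hub : x ⬝ᵥ A *ᵥ x ≤ α * X := h x
  have hq0 : 0 ≤ x ⬝ᵥ A *ᵥ x := psd_quad_nonneg hA.posSemidef x
  have hT0 : 0 ≤ T := by rw [hT]; exact psd_quad_nonneg hA.posSemidef z
  -- X^2 ≤ α X T
  rcases hX0.lt_or_eq with h1 | h1
  · have h2 : X ≤ α * T := by nlinarith
    calc α⁻¹ * X ≤ α⁻¹ * (α * T) := by
          apply mul_le_mul_of_nonneg_left h2 (by positivity)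
      _ = T := by field_simp
  · rw [← h1]
    simpa using hT0

end BFGSAux3

namespace BFGSStep
open BFGSAux BFGSAux2 BFGSAux3
variable {d : ℕ}

lemma transpose_vecMulVec (u v : Fin d → ℝ) : (vecMulVec u v)ᵀ = vecMulVec v u := by
  ext i j; simp [vecMulVec_apply, mul_comm]

set_option maxHeartbeats 1000000 in
lemma step {𝓗 : Matrix (Fin d) (Fin d) ℝ} {s y : Fin d → ℝ}
    {ε LamHat α γ : ℝ} (hε : 0 < ε) (hL : 0 < LamHat) (hγ : 0 ≤ γ)
    (h𝓗 : 𝓗.PosDef) (hs : s ≠ 0)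
    (hys : y ⬝ᵥ s ≥ ε * (s ⬝ᵥ s)) (hyy : y ⬝ᵥ y ≤ LamHat * (y ⬝ᵥ s))
    (hub : ∀ x, x ⬝ᵥ 𝓗 *ᵥ x ≤ α * (x ⬝ᵥ x))
    (hinvq : ∀ x, x ⬝ᵥ 𝓗⁻¹ *ᵥ x ≤ γ * (x ⬝ᵥ x)) :
    (bfgsUpdate 𝓗 s y).PosDef ∧
    (∀ x, x ⬝ᵥ (bfgsUpdate 𝓗 s y) *ᵥ x ≤ (α + LamHat) * (x ⬝ᵥ x)) ∧
    (∀ x, x ⬝ᵥ (bfgsUpdate 𝓗 s y)⁻¹ *ᵥ x ≤ ((2*(1+LamHat/ε)) * γ + ε⁻¹) * (x ⬝ᵥ x)) := by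
  have hss : 0 < s ⬝ᵥ s := dot_self_pos hs
  have hys0 : 0 < y ⬝ᵥ s := lt_of_lt_of_le (by positivity) hys
  set H := 𝓗⁻¹ with hHdef
  have hHpd : H.PosDef := h𝓗.inv
  have h𝓗t : 𝓗ᵀ = 𝓗 := herm_transpose_eq h𝓗.isHermitian
  have hHt : Hᵀ = H := herm_transpose_eq hHpd.isHermitian
  have hdet : IsUnit 𝓗.det := isUnit_iff_ne_zero.mpr h𝓗.det_pos.ne'
  have hinv1 : 𝓗 * H = 1 := Matrix.mul_nonsing_inv _ hdet
  have hinv2 : H * 𝓗 = 1 := Matrix.nonsing_inv_mul _ hdet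
  set ρ := (y ⬝ᵥ s)⁻¹ with hρdef
  have hρ0 : 0 < ρ := by positivity
  set a := 𝓗 *ᵥ s with hadef
  set b := s ⬝ᵥ 𝓗 *ᵥ s with hbdef
  have hb : 0 < b := pd_quad_pos h𝓗 hs
  set c := H *ᵥ y with hcdef
  set q := y ⬝ᵥ c with hqdef
  set β := ρ^2*q + ρ with hβdef
  have hq0 : 0 ≤ q := by rw [hqdef, hcdef]; exact psd_quad_nonneg hHpd.posSemidef y
  have hupd : bfgsUpdate 𝓗 s y
      = 𝓗 - b⁻¹ • vecMulVec a a + ρ • vecMulVec y y := by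
    unfold bfgsUpdate
    rw [show Matrix.vecMul s 𝓗 = a by rw [← Matrix.mulVec_transpose, h𝓗t]]
  have haH : a ᵥ* H = s := by
    rw [← Matrix.mulVec_transpose, hHt, hadef, Matrix.mulVec_mulVec, hinv2,
      Matrix.one_mulVec]
  have hyH : y ᵥ* H = c := by
    rw [← Matrix.mulVec_transpose, hHt, hcdef]
  have h𝓗c : 𝓗 *ᵥ c = y := by
    rw [hcdef, Matrix.mulVec_mulVec, hinv1, Matrix.one_mulVec]
  have has : a ⬝ᵥ s = b := by rw [dotProduct_comm, hbdef]
  have hac : a ⬝ᵥ c = y ⬝ᵥ s := by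
    rw [hcdef, Matrix.dotProduct_mulVec, haH, dotProduct_comm]
  set H' := H - ρ • vecMulVec s c - ρ • vecMulVec c s + β • vecMulVec s s with hH'def
  have hkey : bfgsUpdate 𝓗 s y * H' = 1 := by
    rw [hupd, hH'def]
    simp only [mul_sub, sub_mul, mul_add, add_mul, Matrix.smul_mul, Matrix.mul_smul,
      mul_vecMulVec, vecMulVec_mul, vecMulVec_mul_vecMulVec, BFGSAux.vecMulVec_mulVec,
      Matrix.sub_mulVec, Matrix.add_mulVec, Matrix.smul_mulVec, ← hadef,
      hinv1, haH, hyH, h𝓗c, has, hac, smul_smul]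
    ext i j
    simp only [Matrix.sub_apply, Matrix.add_apply, Matrix.smul_apply, vecMulVec_apply,
      Matrix.one_apply, smul_eq_mul, Pi.smul_apply]
    have hb' : b ≠ 0 := hb.ne'
    have hys' : (y ⬝ᵥ s) ≠ 0 := hys0.ne'
    rw [hρdef, hβdef, hρdef]
    field_simp
    split_ifs <;> ring
  have hwquad : ∀ x : Fin d → ℝ, x ⬝ᵥ H' *ᵥ x
      = (x - (ρ * (s ⬝ᵥ x)) • y) ⬝ᵥ H *ᵥ (x - (ρ * (s ⬝ᵥ x)) • y) + ρ * (s ⬝ᵥ x)^2 := by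
    intro x
    have h1 : y ⬝ᵥ H *ᵥ x = c ⬝ᵥ x := by rw [Matrix.dotProduct_mulVec, hyH]
    rw [hH'def]
    simp only [Matrix.sub_mulVec, Matrix.add_mulVec, Matrix.smul_mulVec,
      BFGSAux.vecMulVec_mulVec, dotProduct_sub, dotProduct_add, dotProduct_smul,
      Matrix.mulVec_sub, Matrix.mulVec_smul, sub_dotProduct, smul_dotProduct,
      smul_eq_mul, smul_smul, h1]
    rw [dotProduct_comm x c, dotProduct_comm x s, hβdef]
    ring
  have hH'sym : H'.IsHermitian := by
    rw [Matrix.IsHermitian, Matrix.conjTranspose_eq_transpose_of_trivial, hH'def]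
    simp only [Matrix.transpose_sub, Matrix.transpose_add, Matrix.transpose_smul,
      transpose_vecMulVec, hHt]
    module
  have hH'pd : H'.PosDef := by
    refine Matrix.PosDef.of_dotProduct_mulVec_pos hH'sym fun x hx => ?_
    simp only [star_trivial]
    rw [hwquad x]
    rcases eq_or_ne (s ⬝ᵥ x) 0 with h2 | h2
    · simp only [h2, mul_zero, zero_smul, sub_zero]
      have := pd_quad_pos hHpd hx
      nlinarith
    · have h3 : 0 < (s ⬝ᵥ x)^2 := lt_of_le_of_ne (sq_nonneg _) (Ne.symm (pow_ne_zero 2 h2))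
      have h4 := psd_quad_nonneg hHpd.posSemidef (x - (ρ * (s ⬝ᵥ x)) • y)
      nlinarith
  have hUinv : (bfgsUpdate 𝓗 s y)⁻¹ = H' := Matrix.inv_eq_right_inv hkey
  have hkey2 : H' * bfgsUpdate 𝓗 s y = 1 := mul_eq_one_comm.mp hkey
  have hupd_eq : bfgsUpdate 𝓗 s y = H'⁻¹ := (Matrix.inv_eq_right_inv hkey2).symm
  have hupd_pd : (bfgsUpdate 𝓗 s y).PosDef := hupd_eq ▸ hH'pd.inv
  have hX0 : ∀ x : Fin d → ℝ, 0 ≤ x ⬝ᵥ x := dot_self_nonneg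
  refine ⟨hupd_pd, ?_, ?_⟩
  · intro x
    have hexp : x ⬝ᵥ (bfgsUpdate 𝓗 s y) *ᵥ x
        = x ⬝ᵥ 𝓗 *ᵥ x - b⁻¹ * (a ⬝ᵥ x)^2 + ρ * (y ⬝ᵥ x)^2 := by
      rw [hupd]
      simp only [Matrix.sub_mulVec, Matrix.add_mulVec, Matrix.smul_mulVec,
        BFGSAux.vecMulVec_mulVec, dotProduct_sub, dotProduct_add, dotProduct_smul, smul_eq_mul]
      rw [dotProduct_comm x a, dotProduct_comm x y]
      ring
    rw [hexp]
    have hcs1 : (y ⬝ᵥ x)^2 ≤ (y ⬝ᵥ y)*(x ⬝ᵥ x) := dot_sq_le y x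
    have t1 : ρ*(y ⬝ᵥ x)^2 ≤ ρ*((y ⬝ᵥ y)*(x ⬝ᵥ x)) :=
      mul_le_mul_of_nonneg_left hcs1 hρ0.le
    have t2 : ρ*((y ⬝ᵥ y)*(x ⬝ᵥ x)) ≤ ρ*((LamHat*(y ⬝ᵥ s))*(x ⬝ᵥ x)) :=
      mul_le_mul_of_nonneg_left (mul_le_mul_of_nonneg_right hyy (hX0 x)) hρ0.le
    have t3 : ρ*((LamHat*(y ⬝ᵥ s))*(x ⬝ᵥ x)) = LamHat*(x ⬝ᵥ x) := by
      rw [hρdef]; field_simp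
    have t4 : 0 ≤ b⁻¹ * (a ⬝ᵥ x)^2 := by positivity
    have t5 := hub x
    linarith
  · intro x
    rw [hUinv, hwquad x]
    have h1 := hinvq ((x - (ρ * (s ⬝ᵥ x)) • y))
    have hw : (x - (ρ * (s ⬝ᵥ x)) • y) ⬝ᵥ (x - (ρ * (s ⬝ᵥ x)) • y)
        = x ⬝ᵥ x - 2*(ρ * (s ⬝ᵥ x))*(x ⬝ᵥ y) + (ρ * (s ⬝ᵥ x))^2*(y ⬝ᵥ y) := by
      simp only [dotProduct_sub, sub_dotProduct, dotProduct_smul, smul_dotProduct,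
        smul_eq_mul]
      rw [dotProduct_comm y x]
      ring
    have hpos : 0 ≤ x ⬝ᵥ x + 2*(ρ * (s ⬝ᵥ x))*(x ⬝ᵥ y) + (ρ * (s ⬝ᵥ x))^2*(y ⬝ᵥ y) := by
      have := hX0 (x + (ρ * (s ⬝ᵥ x)) • y)
      simp only [dotProduct_add, add_dotProduct, dotProduct_smul, smul_dotProduct,
        smul_eq_mul] at this
      rw [dotProduct_comm y x] at this
      nlinarith [this]
    have hcs_s : (s ⬝ᵥ x)^2 ≤ (s ⬝ᵥ s)*(x ⬝ᵥ x) := dot_sq_le s x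
    have hsle : s ⬝ᵥ s ≤ (y ⬝ᵥ s)/ε := by
      rw [le_div_iff₀ hε]; nlinarith [hys]
    have hA : (s ⬝ᵥ x)^2 ≤ ((y ⬝ᵥ s)/ε)*(x ⬝ᵥ x) :=
      le_trans hcs_s (mul_le_mul_of_nonneg_right hsle (hX0 x))
    have term2 : ρ * (s ⬝ᵥ x)^2 ≤ ε⁻¹ * (x ⬝ᵥ x) := by
      have := mul_le_mul_of_nonneg_left hA hρ0.le
      have heq : ρ * (((y ⬝ᵥ s)/ε)*(x ⬝ᵥ x)) = ε⁻¹ * (x ⬝ᵥ x) := by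
        rw [hρdef]; field_simp
      linarith
    have hyy0 : 0 ≤ y ⬝ᵥ y := dot_self_nonneg y
    have htsq : (ρ * (s ⬝ᵥ x))^2*(y ⬝ᵥ y) ≤ (LamHat/ε)*(x ⬝ᵥ x) := by
      have hb1 : (ρ * (s ⬝ᵥ x))^2 ≤ ρ^2 * (((y ⬝ᵥ s)/ε)*(x ⬝ᵥ x)) := by
        have := mul_le_mul_of_nonneg_left hA (sq_nonneg ρ)
        nlinarith [this]
      have hb2 : (ρ * (s ⬝ᵥ x))^2*(y ⬝ᵥ y) ≤ (ρ^2 * (((y ⬝ᵥ s)/ε)*(x ⬝ᵥ x)))*(LamHat*(y ⬝ᵥ s)) := by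
        exact mul_le_mul hb1 hyy hyy0
          (mul_nonneg (sq_nonneg ρ) (mul_nonneg (div_nonneg hys0.le hε.le) (hX0 x)))
      have heq : (ρ^2 * (((y ⬝ᵥ s)/ε)*(x ⬝ᵥ x)))*(LamHat*(y ⬝ᵥ s)) = (LamHat/ε)*(x ⬝ᵥ x) := by
        rw [hρdef]; field_simp
      linarith
    have hwb : (x - (ρ * (s ⬝ᵥ x)) • y) ⬝ᵥ (x - (ρ * (s ⬝ᵥ x)) • y)
        ≤ 2*(x ⬝ᵥ x) + 2*((LamHat/ε)*(x ⬝ᵥ x)) := by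
      rw [hw]; linarith
    have hgw : γ * ((x - (ρ * (s ⬝ᵥ x)) • y) ⬝ᵥ (x - (ρ * (s ⬝ᵥ x)) • y))
        ≤ γ * (2*(x ⬝ᵥ x) + 2*((LamHat/ε)*(x ⬝ᵥ x))) :=
      mul_le_mul_of_nonneg_left hwb hγ
    have hfin : γ * (2*(x ⬝ᵥ x) + 2*((LamHat/ε)*(x ⬝ᵥ x))) + ε⁻¹ * (x ⬝ᵥ x)
        = ((2*(1+LamHat/ε)) * γ + ε⁻¹) * (x ⬝ᵥ x) := by ring
    linarith

end BFGSStep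

namespace BFGSMain
open BFGSAux BFGSAux2 BFGSAux3 BFGSStep

noncomputable def gammaSeq (Sig LamHat ε : ℝ) : ℕ → ℝ
  | 0 => Sig
  | (j+1) => (2*(1+LamHat/ε)) * gammaSeq Sig LamHat ε j + ε⁻¹

lemma gammaSeq_pos {Sig LamHat ε : ℝ} (hS : 0 < Sig) (hε : 0 < ε) (hL : 0 < LamHat) :
    ∀ j, 0 < gammaSeq Sig LamHat ε j := by
  intro j
  induction j with
  | zero => exact hS
  | succ j ih =>
    have h1 : 0 < 2*(1+LamHat/ε) := by positivity
    have h2 : 0 < ε⁻¹ := by positivity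
    simp only [gammaSeq]
    positivity

end BFGSMain
theorem stmt11 (d m : ℕ) (hd : 1 ≤ d) (hm : 1 ≤ m)
    (σ Sig ε LamHat : ℝ) (hσ : 0 < σ) (hsS : σ ≤ Sig) (hε : 0 < ε) (hL : 0 < LamHat) :
    ∃ μ₁ μ₂ : ℝ, 0 < μ₁ ∧ μ₁ ≤ μ₂ ∧
      ∀ (𝓗 : ℕ → Matrix (Fin d) (Fin d) ℝ) (s y : ℕ → Fin d → ℝ),
        (𝓗 0).IsSymm →
        (𝓗 0 - Sig⁻¹ • (1 : Matrix (Fin d) (Fin d) ℝ)).PosSemidef →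
        (σ⁻¹ • (1 : Matrix (Fin d) (Fin d) ℝ) - 𝓗 0).PosSemidef →
        (∀ j, 1 ≤ j → j ≤ m → s j ≠ 0) →
        (∀ j, 1 ≤ j → j ≤ m → y j ⬝ᵥ s j ≥ ε * (s j ⬝ᵥ s j)) →
        (∀ j, 1 ≤ j → j ≤ m → y j ⬝ᵥ y j ≤ LamHat * (y j ⬝ᵥ s j)) →
        (∀ j, j < m → 𝓗 (j + 1) = bfgsUpdate (𝓗 j) (s (j + 1)) (y (j + 1))) →
        (∀ j, j ≤ m → (𝓗 j).PosDef) ∧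
          ((𝓗 m)⁻¹ - μ₁ • (1 : Matrix (Fin d) (Fin d) ℝ)).PosSemidef ∧
          (μ₂ • (1 : Matrix (Fin d) (Fin d) ℝ) - (𝓗 m)⁻¹).PosSemidef := by
  classical
  set μ₁ := (σ⁻¹ + (m:ℝ)*LamHat)⁻¹ with hμ₁def
  set μ₂ := max (BFGSMain.gammaSeq Sig LamHat ε m) μ₁ with hμ₂def
  have hα : 0 < σ⁻¹ + (m:ℝ)*LamHat := by positivity
  have hμ₁pos : 0 < μ₁ := by positivity
  refine ⟨μ₁, μ₂, hμ₁pos, le_max_right _ _, ?_⟩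
  intro 𝓗 s y hsym h1 h2 hs hys hyy hrec
  have hS : 0 < Sig := lt_of_lt_of_le hσ hsS
  have hlow0 : ∀ x, Sig⁻¹*(x ⬝ᵥ x) ≤ x ⬝ᵥ (𝓗 0) *ᵥ x := by
    intro x
    have := h1.dotProduct_mulVec_nonneg x
    simp only [star_trivial, Matrix.sub_mulVec, Matrix.smul_mulVec,
      Matrix.one_mulVec, dotProduct_sub, dotProduct_smul, smul_eq_mul] at this
    linarith
  have hup0 : ∀ x, x ⬝ᵥ (𝓗 0) *ᵥ x ≤ σ⁻¹*(x ⬝ᵥ x) := by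
    intro x
    have := h2.dotProduct_mulVec_nonneg x
    simp only [star_trivial, Matrix.sub_mulVec, Matrix.smul_mulVec,
      Matrix.one_mulVec, dotProduct_sub, dotProduct_smul, smul_eq_mul] at this
    linarith
  have h𝓗0herm : (𝓗 0).IsHermitian := by
    rw [Matrix.IsHermitian, Matrix.conjTranspose_eq_transpose_of_trivial]
    exact hsym
  have h𝓗0pd : (𝓗 0).PosDef := by
    refine Matrix.PosDef.of_dotProduct_mulVec_pos h𝓗0herm fun x hx => ?_
    simp only [star_trivial]
    calc (0:ℝ) < Sig⁻¹*(x ⬝ᵥ x) := by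
          have := BFGSAux.dot_self_pos hx; positivity
      _ ≤ x ⬝ᵥ (𝓗 0) *ᵥ x := hlow0 x
  have hinv0 : ∀ x, x ⬝ᵥ (𝓗 0)⁻¹ *ᵥ x ≤ Sig*(x ⬝ᵥ x) := by
    intro x
    have := BFGSAux2.inv_upper h𝓗0pd (by positivity : (0:ℝ) < Sig⁻¹) hlow0 x
    rwa [inv_inv] at this
  have key : ∀ j, j ≤ m → (𝓗 j).PosDef ∧
      (∀ x, x ⬝ᵥ (𝓗 j) *ᵥ x ≤ (σ⁻¹ + (j:ℝ)*LamHat)*(x ⬝ᵥ x)) ∧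
      (∀ x, x ⬝ᵥ (𝓗 j)⁻¹ *ᵥ x ≤ BFGSMain.gammaSeq Sig LamHat ε j * (x ⬝ᵥ x)) := by
    intro j
    induction j with
    | zero =>
      intro _
      refine ⟨h𝓗0pd, ?_, ?_⟩
      · intro x; simpa using hup0 x
      · intro x; simpa [BFGSMain.gammaSeq] using hinv0 x
    | succ j ih =>
      intro hjm
      have hj : j ≤ m := le_of_lt (Nat.lt_of_succ_le hjm)
      obtain ⟨pd, ub, iv⟩ := ih hj
      have hstep := BFGSStep.step hε hL (BFGSMain.gammaSeq_pos hS hε hL j).le pd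
        (hs (j+1) (Nat.le_add_left 1 j) hjm)
        (hys (j+1) (Nat.le_add_left 1 j) hjm)
        (hyy (j+1) (Nat.le_add_left 1 j) hjm) ub iv
      rw [← hrec j (Nat.lt_of_succ_le hjm)] at hstep
      refine ⟨hstep.1, ?_, ?_⟩
      · intro x
        have := hstep.2.1 x
        have hco : ((σ⁻¹ + (j:ℝ)*LamHat) + LamHat) * (x ⬝ᵥ x)
            = (σ⁻¹ + ((j+1 : ℕ):ℝ)*LamHat) * (x ⬝ᵥ x) := by
          push_cast; ring
        linarith
      · intro x
        have := hstep.2.2 x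
        simpa [BFGSMain.gammaSeq] using this
  obtain ⟨pdm, ubm, ivm⟩ := key m le_rfl
  have htm : ((𝓗 m)⁻¹)ᵀ = (𝓗 m)⁻¹ := BFGSAux2.herm_transpose_eq pdm.inv.isHermitian
  have hlowm := BFGSAux3.inv_lower pdm hα ubm
  refine ⟨fun j hj => (key j hj).1, ?_, ?_⟩
  · refine Matrix.PosSemidef.of_dotProduct_mulVec_nonneg ?_ fun x => ?_
    · rw [Matrix.IsHermitian, Matrix.conjTranspose_eq_transpose_of_trivial]
      simp [Matrix.transpose_sub, Matrix.transpose_smul, Matrix.transpose_one, htm]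
    · simp only [star_trivial, Matrix.sub_mulVec, Matrix.smul_mulVec,
        Matrix.one_mulVec, dotProduct_sub, dotProduct_smul, smul_eq_mul]
      have := hlowm x
      rw [← hμ₁def] at this
      linarith
  · refine Matrix.PosSemidef.of_dotProduct_mulVec_nonneg ?_ fun x => ?_
    · rw [Matrix.IsHermitian, Matrix.conjTranspose_eq_transpose_of_trivial]
      simp [Matrix.transpose_sub, Matrix.transpose_smul, Matrix.transpose_one, htm]
    · simp only [star_trivial, Matrix.sub_mulVec, Matrix.smul_mulVec,
        Matrix.one_mulVec, dotProduct_sub, dotProduct_smul, smul_eq_mul]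
      have h3 := ivm x
      have h4 : BFGSMain.gammaSeq Sig LamHat ε m * (x ⬝ᵥ x) ≤ μ₂ * (x ⬝ᵥ x) :=
        mul_le_mul_of_nonneg_right (le_max_left _ _) (BFGSAux.dot_self_nonneg x)
      linarith
end
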